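/- Let V be a finite-dimensional complex inner product space and A a self-adjoint endomorphism of V. For every nonzero v ∈ V, the limit −lim_{t→∞} (1/t) · log ⟨exp(−tA) v, v⟩ exists and equals the minimum of those eigenvalues μ of A for which the orthogonal projection of v onto the eigenspace ker(A − μ·id) is nonzero. -/

import Mathlib

open NormedSpace in
lemma exp_apply_eigen {V : Type*} [NormedAddCommGroup V] [InnerProductSpace ℂ V]
    [FiniteDimensional ℂ V] (B : V →L[ℂ] V) (z : ℂ) (x : V) (h : B x = z • x) :
    NormedSpace.exp B x = Complex.exp z • x := by
  have hpow : ∀ n : ℕ, (B ^ n) x = z ^ n • x := by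
    intro n
    induction n with
    | zero => simp
    | succ n ih =>
      rw [pow_succ, pow_succ, ContinuousLinearMap.mul_apply, h, map_smul, ih, smul_smul, mul_comm]
  have hs : Summable fun n : ℕ => ((n.factorial : ℂ)⁻¹ : ℂ) • B ^ n :=
    NormedSpace.expSeries_summable' B
  have h1 : NormedSpace.exp B x = ∑' n : ℕ, (((n.factorial : ℂ)⁻¹ : ℂ) • B ^ n) x := by
    rw [NormedSpace.exp_eq_tsum ℂ]
    exact (ContinuousLinearMap.apply ℂ V x).map_tsum hs
  have h2 : ∀ n : ℕ, (((n.factorial : ℂ)⁻¹ : ℂ) • B ^ n) x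
      = ((n.factorial : ℂ)⁻¹ * z ^ n) • x := by
    intro n
    rw [ContinuousLinearMap.smul_apply, hpow, smul_smul]
  have hsz : Summable fun n : ℕ => ((n.factorial : ℂ)⁻¹ : ℂ) * z ^ n := by
    simpa [smul_eq_mul] using NormedSpace.expSeries_summable' (𝕂 := ℂ) z
  rw [h1]
  simp_rw [h2]
  rw [hsz.tsum_smul_const, Complex.exp_eq_exp_ℂ, NormedSpace.exp_eq_tsum ℂ]
  simp [smul_eq_mul]


/-- Let `V` be a finite-dimensional complex inner product space and `A`
a self-adjoint endomorphism of `V`.  For every nonzero `v ∈ V` the limit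
`-lim_{t→∞} (1/t) log ⟨exp(-tA) v, v⟩` exists and equals the minimum of those eigenvalues
`μ` of `A` for which the orthogonal projection of `v` onto `ker (A - μ·id)` is nonzero. -/
theorem statement3 {V : Type*} [NormedAddCommGroup V] [InnerProductSpace ℂ V]
    [FiniteDimensional ℂ V]
    (A : V →L[ℂ] V) (hA : ∀ x y : V, (inner ℂ (A x) y : ℂ) = inner ℂ x (A y))
    (v : V) (hv : v ≠ 0) :
    ∃ μ₀ : ℝ,
      IsLeast {μ : ℝ |
        Submodule.orthogonalProjectionOnto (Module.End.eigenspace (A : V →ₗ[ℂ] V) (μ : ℂ)) v ≠ 0} μ₀ ∧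
      Filter.Tendsto
        (fun t : ℝ =>
          -((1 / t) *
            Real.log ((inner ℂ ((NormedSpace.exp ((-(t : ℂ)) • A)) v) v : ℂ).re)))
        Filter.atTop (nhds μ₀) := by
  classical
  have hA' : (A : V →ₗ[ℂ] V).IsSymmetric := fun x y => hA x y
  have hn : Module.finrank ℂ V = Module.finrank ℂ V := rfl
  set e := hA'.eigenvectorBasis hn with he
  set lam := hA'.eigenvalues hn with hlam
  set c : Fin (Module.finrank ℂ V) → ℂ := fun i => e.repr v i with hc
  have hsum : ∑ i, c i • e i = v := e.sum_repr v
  have horth : ∀ i j, (inner ℂ (e i) (e j) : ℂ) = if i = j then 1 else 0 :=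
    orthonormal_iff_ite.mp e.orthonormal
  have heig : ∀ i, (A : V →ₗ[ℂ] V) (e i) = (lam i : ℂ) • e i :=
    fun i => hA'.apply_eigenvectorBasis hn i
  set S : Finset (Fin (Module.finrank ℂ V)) := Finset.univ.filter (fun i => c i ≠ 0) with hSdef
  have hS : S.Nonempty := by
    by_contra h
    apply hv
    rw [← hsum]
    apply Finset.sum_eq_zero
    intro i _
    have : c i = 0 := by
      by_contra hci
      exact h ⟨i, by simp [hSdef, hci]⟩
    simp [this]
  set μ₀ := S.inf' hS lam with hμ₀
  obtain ⟨i₀, hi₀S, hi₀⟩ := S.exists_mem_eq_inf' hS lam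
  have hci₀ : c i₀ ≠ 0 := by simpa [hSdef] using hi₀S
  -- characterize the orthogonal projection onto each eigenspace
  have hproj : ∀ μ : ℝ,
      (Submodule.orthogonalProjectionOnto (Module.End.eigenspace (A : V →ₗ[ℂ] V) (μ : ℂ)) v : V)
        = ∑ i ∈ Finset.univ.filter (fun i => lam i = μ), c i • e i := by
    intro μ
    apply Submodule.eq_starProjection_of_mem_of_inner_eq_zero
    · apply Submodule.sum_mem
      intro i hi
      simp only [Finset.mem_filter] at hi
      apply Submodule.smul_mem
      rw [Module.End.mem_eigenspace_iff, heig i, hi.2]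
    · intro w hw
      have hvu : v - ∑ i ∈ Finset.univ.filter (fun i => lam i = μ), c i • e i
          = ∑ i ∈ Finset.univ.filter (fun i => ¬ lam i = μ), c i • e i := by
        rw [← hsum, ← Finset.sum_filter_add_sum_filter_not Finset.univ (fun i => lam i = μ)
          (fun i => c i • e i)]
        abel
      rw [hvu, sum_inner]
      apply Finset.sum_eq_zero
      intro i hi
      simp only [Finset.mem_filter] at hi
      rw [inner_smul_left]
      have : (inner ℂ (e i) w : ℂ) = 0 := by
        have hne : (lam i : ℂ) ≠ (μ : ℂ) := by
          simpa using hi.2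
        have hei : e i ∈ Module.End.eigenspace (A : V →ₗ[ℂ] V) (lam i : ℂ) := by
          rw [Module.End.mem_eigenspace_iff, heig i]
        exact hA'.orthogonalFamily_eigenspaces hne ⟨e i, hei⟩ ⟨w, hw⟩
      rw [this, mul_zero]
  have hproj_ne : ∀ μ : ℝ,
      Submodule.orthogonalProjectionOnto (Module.End.eigenspace (A : V →ₗ[ℂ] V) (μ : ℂ)) v ≠ 0
        ↔ ∃ i, lam i = μ ∧ c i ≠ 0 := by
    intro μ
    constructor
    · intro h
      by_contra hcon
      push_neg at hcon
      apply h
      have : (Submodule.orthogonalProjectionOnto (Module.End.eigenspace (A : V →ₗ[ℂ] V) (μ : ℂ)) v : V) = 0 := by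
        rw [hproj μ]
        apply Finset.sum_eq_zero
        intro i hi
        simp only [Finset.mem_filter] at hi
        rw [hcon i hi.2, zero_smul]
      exact Subtype.ext this
    · rintro ⟨i, hiμ, hci⟩
      intro h
      have h0 : (Submodule.orthogonalProjectionOnto (Module.End.eigenspace (A : V →ₗ[ℂ] V) (μ : ℂ)) v : V) = 0 := by
        rw [h]; rfl
      rw [hproj μ] at h0
      apply hci
      have := congr_arg (fun x => (inner ℂ (e i) x : ℂ)) h0
      simp only [inner_sum, inner_smul_right, inner_zero_right] at this
      rw [Finset.sum_eq_single i] at this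
      · rwa [horth i i, if_pos rfl, mul_one] at this
      · intro j hj hji
        rw [horth i j, if_neg (Ne.symm hji), mul_zero]
      · intro hi
        simp [hiμ] at hi
  refine ⟨μ₀, ⟨?_, ?_⟩, ?_⟩
  · -- μ₀ is in the set
    rw [Set.mem_setOf_eq, hproj_ne]
    exact ⟨i₀, hi₀.symm, hci₀⟩
  · -- lower bound
    intro μ hμ
    rw [Set.mem_setOf_eq, hproj_ne] at hμ
    obtain ⟨i, hiμ, hci⟩ := hμ
    rw [← hiμ]
    exact Finset.inf'_le lam (by simp [hSdef, hci])
  · -- the limit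
    have hinner : ∀ t : ℝ,
        ((inner ℂ ((NormedSpace.exp ((-(t : ℂ)) • A)) v) v : ℂ)).re
          = ∑ i, Real.exp (-(t * lam i)) * ‖c i‖ ^ 2 := by
      intro t
      have hexp : (NormedSpace.exp ((-(t : ℂ)) • A)) v
          = ∑ i, (c i * Real.exp (-(t * lam i))) • e i := by
        conv_lhs => rw [← hsum]
        rw [map_sum]
        apply Finset.sum_congr rfl
        intro i _
        rw [map_smul]
        have hB : ((-(t : ℂ)) • A) (e i) = ((-(t * lam i) : ℝ) : ℂ) • e i := by
          rw [ContinuousLinearMap.smul_apply]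
          have : A (e i) = (lam i : ℂ) • e i := heig i
          rw [this, smul_smul]
          congr 1
          push_cast
          ring
        rw [exp_apply_eigen _ _ _ hB, ← Complex.ofReal_exp, smul_smul]
      rw [hexp, sum_inner]
      rw [Complex.re_sum]
      apply Finset.sum_congr rfl
      intro i _
      rw [inner_smul_left]
      have hci : (inner ℂ (e i) v : ℂ) = c i := (e.repr_apply_apply v i).symm
      rw [hci, map_mul, Complex.conj_ofReal, mul_assoc, mul_left_comm,
        mul_comm ((starRingEnd ℂ) (c i)), Complex.mul_conj, ← Complex.ofReal_mul,
        Complex.ofReal_re, Complex.normSq_eq_norm_sq]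
    set w : Fin (Module.finrank ℂ V) → ℝ := fun i => ‖c i‖ ^ 2 with hw
    set g : ℝ → ℝ := fun t => ∑ i, Real.exp (-(t * (lam i - μ₀))) * w i with hg
    have hfg : ∀ t : ℝ, (∑ i, Real.exp (-(t * lam i)) * w i) = Real.exp (-(t * μ₀)) * g t := by
      intro t
      rw [hg, Finset.mul_sum]
      apply Finset.sum_congr rfl
      intro i _
      rw [← mul_assoc, ← Real.exp_add]
      ring_nf
    have hgpos : ∀ t : ℝ, 0 < g t := by
      intro t
      apply Finset.sum_pos' (fun i _ => by positivity)
      refine ⟨i₀, Finset.mem_univ i₀, ?_⟩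
      exact mul_pos (Real.exp_pos _) (pow_pos (norm_pos_iff.mpr hci₀) 2)
    set L : ℝ := ∑ i, (if lam i = μ₀ then w i else 0) with hL
    have hLpos : 0 < L := by
      apply Finset.sum_pos' (fun i _ => by positivity)
      refine ⟨i₀, Finset.mem_univ i₀, ?_⟩
      rw [if_pos hi₀.symm]
      exact pow_pos (norm_pos_iff.mpr hci₀) 2
    have hgL : Filter.Tendsto g Filter.atTop (nhds L) := by
      rw [hg, hL]
      apply tendsto_finset_sum
      intro i _
      by_cases hiμ : lam i = μ₀
      · rw [if_pos hiμ]
        have : (fun t : ℝ => Real.exp (-(t * (lam i - μ₀))) * w i) = fun _ => w i := by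
          funext t
          rw [hiμ]
          simp
        rw [this]
        exact tendsto_const_nhds
      · rw [if_neg hiμ]
        by_cases hwi : w i = 0
        · have : (fun t : ℝ => Real.exp (-(t * (lam i - μ₀))) * w i) = fun _ => 0 := by
            funext t; rw [hwi, mul_zero]
          rw [this]
          exact tendsto_const_nhds
        · have hci : c i ≠ 0 := by
            intro h; apply hwi; rw [hw]; simp [h]
          have hiS : i ∈ S := by simp [hSdef, hci]
          have hlt : μ₀ < lam i := lt_of_le_of_ne (Finset.inf'_le lam hiS) (Ne.symm hiμ)
          have hd : 0 < lam i - μ₀ := by linarith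
          have h1 : Filter.Tendsto (fun t : ℝ => -(t * (lam i - μ₀))) Filter.atTop Filter.atBot := by
            apply Filter.tendsto_neg_atTop_atBot.comp
            exact Filter.Tendsto.atTop_mul_const hd Filter.tendsto_id
          have h2 : Filter.Tendsto (fun t : ℝ => Real.exp (-(t * (lam i - μ₀))))
              Filter.atTop (nhds 0) := Real.tendsto_exp_atBot.comp h1
          have := h2.mul_const (w i)
          rwa [zero_mul] at this
    have hlog : Filter.Tendsto (fun t => Real.log (g t)) Filter.atTop (nhds (Real.log L)) :=
      ((Real.continuousAt_log hLpos.ne').tendsto).comp hgL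
    have h1t : Filter.Tendsto (fun t : ℝ => 1 / t) Filter.atTop (nhds 0) := by
      simpa [one_div] using tendsto_inv_atTop_zero
    have hmain : Filter.Tendsto (fun t : ℝ => μ₀ - (1 / t) * Real.log (g t))
        Filter.atTop (nhds μ₀) := by
      have := (h1t.mul hlog)
      rw [zero_mul] at this
      have h2 := tendsto_const_nhds (x := μ₀) (f := Filter.atTop (α := ℝ)) |>.sub this
      simpa using h2
    apply Filter.Tendsto.congr' _ hmain
    filter_upwards [Filter.eventually_gt_atTop 0] with t ht
    rw [hinner t, hfg t, Real.log_mul (Real.exp_ne_zero _) (hgpos t).ne', Real.log_exp]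
    field_simp
    ring
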